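/- Let F be a continuous CDF with survival function S = 1 − F, and on a probability space let W be a bounded measurable real-valued random variable and C a real-valued random variable (not necessarily independent of W). Then (1/4)·∫_ℝ E[ W·1{C ≥ u} ]·S(u)² dμ_F(u) = (1/12)·( E[W] − E[ W·S(C)³ ] ). -/

import Mathlib

open MeasureTheory Set Filter

lemma F_nonneg (F : StieltjesFunction ℝ) (h0 : Tendsto F atBot (nhds 0)) (u : ℝ) : 0 ≤ F u :=
  le_of_tendsto h0 (eventually_atBot.2 ⟨u, fun _ hx => F.mono hx⟩)

lemma F_le_one (F : StieltjesFunction ℝ) (h1 : Tendsto F atTop (nhds 1)) (u : ℝ) : F u ≤ 1 :=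
  ge_of_tendsto h1 (eventually_atTop.2 ⟨u, fun _ hx => F.mono hx⟩)

lemma F_prob (F : StieltjesFunction ℝ) (h0 : Tendsto F atBot (nhds 0))
    (h1 : Tendsto F atTop (nhds 1)) : IsProbabilityMeasure F.measure :=
  ⟨by rw [F.measure_univ h0 h1]; norm_num⟩

lemma map_eq (F : StieltjesFunction ℝ) (hFc : Continuous F)
    (h0 : Tendsto F atBot (nhds 0)) (h1 : Tendsto F atTop (nhds 1)) :
    F.measure.map F = volume.restrict (Ioc (0:ℝ) 1) := by
  haveI := F_prob F h0 h1
  refine Measure.ext_of_Iic _ _ (fun y => ?_)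
  rw [Measure.map_apply hFc.measurable measurableSet_Iic,
    Measure.restrict_apply' measurableSet_Ioc]
  have hIic : Iic y ∩ Ioc (0:ℝ) 1 = Ioc 0 (min y 1) := by
    ext x
    simp only [mem_inter_iff, mem_Iic, mem_Ioc, le_min_iff]
    tauto
  rw [hIic, Real.volume_Ioc]
  rcases lt_or_ge y 0 with hy | hy
  · have he : ⇑F ⁻¹' Iic y = ∅ := by
      ext u; simp only [mem_preimage, mem_Iic, mem_empty_iff_false, iff_false, not_le]
      exact lt_of_lt_of_le hy (F_nonneg F h0 u)
    rw [he, measure_empty, eq_comm, ENNReal.ofReal_eq_zero]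
    have : min y 1 ≤ y := min_le_left _ _
    linarith
  rcases le_or_gt 1 y with hy1 | hy1
  · have he : ⇑F ⁻¹' Iic y = univ := by
      ext u; simp only [mem_preimage, mem_Iic, mem_univ, iff_true]
      exact le_trans (F_le_one F h1 u) hy1
    rw [he, measure_univ, min_eq_right hy1]
    simp
  -- 0 ≤ y < 1
  rcases eq_empty_or_nonempty (⇑F ⁻¹' Iic y) with hAe | hAne
  · have hy0 : y ≤ 0 := by
      refine ge_of_tendsto h0 (Eventually.of_forall fun u => ?_)
      have hu : ¬ (F u ≤ y) := eq_empty_iff_forall_notMem.1 hAe u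
      linarith [lt_of_not_ge hu]
    have hy00 : y = 0 := le_antisymm hy0 hy
    rw [hAe, hy00]
    simp
  · have hbdd : BddAbove (⇑F ⁻¹' Iic y) := by
      obtain ⟨b, hb⟩ : ∃ b, y < F b := by
        by_contra h
        push_neg at h
        exact absurd (le_of_tendsto h1 (Eventually.of_forall h)) (not_le.2 hy1)
      exact ⟨b, fun u hu =>
        le_of_not_gt fun hub => absurd (le_trans (F.mono hub.le) hu) (not_le.2 hb)⟩
    have hAclosed : IsClosed (⇑F ⁻¹' Iic y) := isClosed_Iic.preimage hFc
    set c := sSup (⇑F ⁻¹' Iic y) with hc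
    have hcA : c ∈ ⇑F ⁻¹' Iic y := hAclosed.csSup_mem hAne hbdd
    have hAeq : ⇑F ⁻¹' Iic y = Iic c := by
      ext u
      constructor
      · exact fun hu => le_csSup hbdd hu
      · exact fun hu => le_trans (F.mono hu) hcA
    have hFc_eq : F c = y := by
      refine le_antisymm hcA ?_
      have htend : Tendsto F (nhdsWithin c (Ioi c)) (nhds (F c)) :=
        (hFc.tendsto c).mono_left nhdsWithin_le_nhds
      refine ge_of_tendsto htend (eventually_nhdsWithin_of_forall fun u hu => ?_)
      by_contra h
      exact absurd (le_csSup hbdd ((lt_of_not_ge h).le : F u ≤ y)) (not_le.2 hu)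
    rw [hAeq, F.measure_Iic h0, hFc_eq, min_eq_left hy1.le]

lemma indicator_ae (F : StieltjesFunction ℝ) (hFc : Continuous F)
    (h0 : Tendsto F atBot (nhds 0)) (h1 : Tendsto F atTop (nhds 1)) (c : ℝ) :
    (fun u => (Iic c).indicator (fun u => (1 - F u)^2) u)
      =ᵐ[F.measure] (fun u => (Iic (F c)).indicator (fun y => (1-y)^2) (F u)) := by
  haveI := F_prob F h0 h1
  set A := Ioi c ∩ {u : ℝ | F u ≤ F c} with hA
  have hnull : F.measure A = 0 := by
    by_cases hbdd : BddAbove A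
    · rcases eq_empty_or_nonempty A with hAe | hAne
      · rw [hAe]; exact measure_empty
      · set e := sSup A with he
        have heclo : e ∈ closure A := csSup_mem_closure hAne hbdd
        have heF : F e ≤ F c := by
          have hsub : closure A ⊆ {u : ℝ | F u ≤ F c} :=
            closure_minimal inter_subset_right (isClosed_Iic.preimage hFc)
          exact hsub heclo
        have hsub : A ⊆ Ioc c e := fun u hu => ⟨hu.1, le_csSup hbdd hu⟩
        refine measure_mono_null hsub ?_
        rw [F.measure_Ioc, ENNReal.ofReal_eq_zero]
        linarith
    · have hFc1 : (1:ℝ) ≤ F c := by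
        refine le_of_tendsto h1 (Eventually.of_forall fun x => ?_)
        obtain ⟨u, huA, hxu⟩ := not_bddAbove_iff.1 hbdd x
        exact (F.mono hxu.le).trans huA.2
      have hFceq : F c = 1 := le_antisymm (F_le_one F h1 c) hFc1
      refine measure_mono_null inter_subset_left ?_
      rw [← Set.compl_Iic, measure_compl measurableSet_Iic (measure_ne_top _ _),
        measure_univ, F.measure_Iic h0, hFceq]
      simp
  rw [Filter.EventuallyEq, ae_iff]
  refine measure_mono_null (fun u hu => ?_) hnull
  simp only [mem_setOf_eq, indicator_apply, mem_Iic] at hu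
  by_cases h1' : u ≤ c
  · exact absurd (by rw [if_pos h1', if_pos (F.mono h1')]) hu
  · constructor
    · exact lt_of_not_ge h1'
    · by_contra h2'
      have h2'' : ¬ (F u ≤ F c) := h2'
      rw [if_neg h1', if_neg h2''] at hu
      exact hu rfl

lemma key_integral (F : StieltjesFunction ℝ) (hFc : Continuous F)
    (h0 : Tendsto F atBot (nhds 0)) (h1 : Tendsto F atTop (nhds 1)) (c : ℝ) :
    ∫ u, (Iic c).indicator (fun u => (1 - F u)^2) u ∂F.measure
      = (1 - (1 - F c)^3)/3 := by
  haveI := F_prob F h0 h1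
  have hg : Measurable fun y : ℝ => (Iic (F c)).indicator (fun y => (1-y)^2) y :=
    Measurable.indicator ((measurable_const.sub measurable_id).pow_const 2) measurableSet_Iic
  rw [integral_congr_ae (indicator_ae F hFc h0 h1 c),
    ← integral_map hFc.measurable.aemeasurable hg.aestronglyMeasurable,
    map_eq F hFc h0 h1, integral_indicator measurableSet_Iic,
    Measure.restrict_restrict measurableSet_Iic]
  have hFc0 := F_nonneg F h0 c
  have hFc1 := F_le_one F h1 c
  have hset : Iic (F c) ∩ Ioc (0:ℝ) 1 = Ioc 0 (F c) := by
    ext x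
    simp only [mem_inter_iff, mem_Iic, mem_Ioc]
    constructor
    · rintro ⟨hx, hx0, _⟩; exact ⟨hx0, hx⟩
    · rintro ⟨hx0, hx⟩; exact ⟨hx, hx0, hx.trans hFc1⟩
  rw [hset, ← intervalIntegral.integral_of_le hFc0]
  have hexp : ∀ y : ℝ, (1 - y)^2 = 1 - 2*y + y^2 := fun y => by ring
  simp_rw [hexp]
  rw [intervalIntegral.integral_add ((intervalIntegrable_const).sub
      ((intervalIntegral.intervalIntegrable_id).const_mul 2))
      (intervalIntegral.intervalIntegrable_pow 2),
    intervalIntegral.integral_sub intervalIntegrable_const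
      ((intervalIntegral.intervalIntegrable_id).const_mul 2),
    intervalIntegral.integral_const, intervalIntegral.integral_const_mul,
    integral_id, integral_pow]
  simp only [smul_eq_mul]
  ring

theorem sigma1_simplification (F : StieltjesFunction ℝ) (hFc : Continuous F)
    (h0 : Filter.Tendsto F Filter.atBot (nhds 0))
    (h1 : Filter.Tendsto F Filter.atTop (nhds 1))
    {Ω : Type*} [MeasurableSpace Ω] (P : Measure Ω) [IsProbabilityMeasure P]
    (W : Ω → ℝ) (hW : Measurable W) (M : ℝ) (hWb : ∀ ω, |W ω| ≤ M)
    (C : Ω → ℝ) (hC : Measurable C) :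
    (1 / 4) * ∫ u, (∫ ω, W ω * (if u ≤ C ω then (1 : ℝ) else 0) ∂P) * (1 - F u) ^ 2
        ∂F.measure
      = (1 / 12) * ((∫ ω, W ω ∂P) - ∫ ω, W ω * (1 - F (C ω)) ^ 3 ∂P) := by
  haveI := F_prob F h0 h1
  set f : ℝ → Ω → ℝ := fun u ω => W ω * (if u ≤ C ω then (1:ℝ) else 0) * (1 - F u)^2
    with hf
  have hSu : ∀ u, 0 ≤ 1 - F u ∧ 1 - F u ≤ 1 := fun u =>
    ⟨by linarith [F_le_one F h1 u], by linarith [F_nonneg F h0 u]⟩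
  have hfmeas : Measurable (Function.uncurry f) := by
    refine Measurable.mul (Measurable.mul (hW.comp measurable_snd) ?_) ?_
    · refine Measurable.ite ?_ measurable_const measurable_const
      exact measurableSet_le measurable_fst (hC.comp measurable_snd)
    · exact (measurable_const.sub (hFc.measurable.comp measurable_fst)).pow_const 2
  have hbound : ∀ (u : ℝ) (ω : Ω), |f u ω| ≤ |M| := by
    intro u ω
    have h1' : |if u ≤ C ω then (1:ℝ) else 0| ≤ 1 := by split <;> simp
    have h2' : |(1 - F u)^2| ≤ 1 := by
      rw [abs_of_nonneg (sq_nonneg _)]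
      nlinarith [(hSu u).1, (hSu u).2]
    have hWM : |W ω| ≤ |M| := (hWb ω).trans (le_abs_self M)
    calc |f u ω| = |W ω| * |if u ≤ C ω then (1:ℝ) else 0| * |(1 - F u)^2| := by
          rw [hf]; rw [abs_mul, abs_mul]
      _ ≤ |M| * 1 * 1 := by
          refine mul_le_mul (mul_le_mul hWM h1' (abs_nonneg _) (abs_nonneg _)) h2'
            (abs_nonneg _) ?_
          positivity
      _ = |M| := by ring
  have hint : Integrable (Function.uncurry f) (F.measure.prod P) := by
    refine Integrable.mono' (integrable_const |M|) hfmeas.aestronglyMeasurable ?_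
    exact Eventually.of_forall fun p => hbound p.1 p.2
  have step1 : (∫ u, (∫ ω, W ω * (if u ≤ C ω then (1 : ℝ) else 0) ∂P) * (1 - F u) ^ 2
      ∂F.measure) = ∫ u, ∫ ω, f u ω ∂P ∂F.measure := by
    refine integral_congr_ae (Eventually.of_forall fun u => ?_)
    exact (integral_mul_const _ _).symm
  have step2 : (∫ u, ∫ ω, f u ω ∂P ∂F.measure) = ∫ ω, ∫ u, f u ω ∂F.measure ∂P :=
    integral_integral_swap hint
  have step3 : ∀ ω, (∫ u, f u ω ∂F.measure) = W ω * ((1 - (1 - F (C ω))^3)/3) := by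
    intro ω
    have heq : ∀ u, f u ω = W ω * ((Iic (C ω)).indicator (fun u => (1 - F u)^2) u) := by
      intro u
      rw [hf]
      simp only [indicator_apply, mem_Iic]
      by_cases h : u ≤ C ω <;> simp [h]
    simp_rw [heq]
    rw [integral_const_mul, key_integral F hFc h0 h1 (C ω)]
  have hintW : Integrable W P := by
    refine Integrable.mono' (integrable_const |M|) hW.aestronglyMeasurable ?_
    exact Eventually.of_forall fun ω => (hWb ω).trans (le_abs_self M)
  have hintW3 : Integrable (fun ω => W ω * (1 - F (C ω))^3) P := by
    refine Integrable.mono' (integrable_const |M|) ?_ ?_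
    · exact (hW.mul ((measurable_const.sub (hFc.measurable.comp hC)).pow_const 3)).aestronglyMeasurable
    · refine Eventually.of_forall fun ω => ?_
      have h3 : |(1 - F (C ω))^3| ≤ 1 := by
        rw [abs_of_nonneg (pow_nonneg (hSu (C ω)).1 3)]
        exact pow_le_one₀ (hSu (C ω)).1 (hSu (C ω)).2
      calc |W ω * (1 - F (C ω))^3| = |W ω| * |(1 - F (C ω))^3| := abs_mul _ _
        _ ≤ |M| * 1 := mul_le_mul ((hWb ω).trans (le_abs_self M)) h3 (abs_nonneg _)
            (abs_nonneg _)
        _ = |M| := mul_one _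
  have step4 : (∫ ω, ∫ u, f u ω ∂F.measure ∂P)
      = (1/3) * ((∫ ω, W ω ∂P) - ∫ ω, W ω * (1 - F (C ω))^3 ∂P) := by
    have heq : ∀ ω, (∫ u, f u ω ∂F.measure)
        = (1/3) * (W ω - W ω * (1 - F (C ω))^3) := by
      intro ω; rw [step3 ω]; ring
    simp_rw [heq]
    rw [integral_const_mul, integral_sub hintW hintW3]
  rw [step1, step2, step4]
  ring
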